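/- (Corollary 14 of the paper, adequacy for the propositional/quantifier-free fragment) Let L be a relational vocabulary, let 𝔄 and 𝔅 be classes of L-structures with assignments, and let α be a countable ordinal with α ≥ 1. Let WinI^QF(𝔄,𝔅,γ) be defined exactly like WinI(𝔄,𝔅,γ) but with only the clauses (i)–(v) (splitting moves) and without the supplementing clauses (vi)–(vii). Then WinI^QF(𝔄,𝔅,α) holds if and only if there is a quantifier-free L_{ω1ω}-formula φ (a formula containing no quantifiers ∃x_n or ∀x_n) with s(φ) ≤ α such that (𝔄,𝔅) ⊨ φ. -/

import Mathlib

structure Vocab where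
  Rel : Type
  arity : Rel → ℕ

structure Struc (L : Vocab) where
  Dom : Type
  nonempty : Nonempty Dom
  rel : (R : L.Rel) → (Fin (L.arity R) → Dom) → Prop

/-- `L_{ω₁ω}`-formulas in negation normal form. -/
inductive Fml (L : Vocab) : Type
  | eq : ℕ → ℕ → Fml L
  | neq : ℕ → ℕ → Fml L
  | rel : (R : L.Rel) → (Fin (L.arity R) → ℕ) → Fml L
  | nrel : (R : L.Rel) → (Fin (L.arity R) → ℕ) → Fml L
  | and : Fml L → Fml L → Fml L
  | or : Fml L → Fml L → Fml L
  | iand : (ℕ → Fml L) → Fml L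
  | ior : (ℕ → Fml L) → Fml L
  | ex : ℕ → Fml L → Fml L
  | all : ℕ → Fml L → Fml L

def Sat {L : Vocab} (A : Struc L) (v : ℕ → A.Dom) : Fml L → Prop
  | .eq i j => v i = v j
  | .neq i j => v i ≠ v j
  | .rel R ts => A.rel R (fun k => v (ts k))
  | .nrel R ts => ¬ A.rel R (fun k => v (ts k))
  | .and φ ψ => Sat A v φ ∧ Sat A v ψ
  | .or φ ψ => Sat A v φ ∨ Sat A v ψ
  | .iand f => ∀ i : ℕ, Sat A v (f i)
  | .ior f => ∃ i : ℕ, Sat A v (f i)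
  | .ex n φ => ∃ a : A.Dom, Sat A (Function.update v n a) φ
  | .all n φ => ∀ a : A.Dom, Sat A (Function.update v n a) φ

universe u

/-- Natural (Hessenberg) addition of ordinals, as formerly defined in Mathlib
(`Ordinal.nadd`, removed since). -/
noncomputable def Ordinal.nadd (a b : Ordinal.{u}) : Ordinal.{u} :=
  max (⨆ x : Set.Iio a, Order.succ (Ordinal.nadd x.1 b))
    (⨆ x : Set.Iio b, Order.succ (Ordinal.nadd a x.1))
termination_by (a, b)
decreasing_by all_goals cases x; decreasing_tactic

/-- Finite partial natural (Hessenberg) sums. -/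
noncomputable def natSumPrefix (γ : ℕ → Ordinal) : ℕ → Ordinal
  | 0 => 0
  | n + 1 => Ordinal.nadd (natSumPrefix γ n) (γ n)

/-- The infinite natural sum. -/
noncomputable def inatSum (γ : ℕ → Ordinal) : Ordinal := ⨆ n : ℕ, natSumPrefix γ n

noncomputable def size {L : Vocab} : Fml L → Ordinal
  | .eq _ _ => 1
  | .neq _ _ => 1
  | .rel _ _ => 1
  | .nrel _ _ => 1
  | .and φ ψ => Ordinal.nadd (size φ) (size ψ)
  | .or φ ψ => Ordinal.nadd (size φ) (size ψ)
  | .iand f => inatSum (fun i => size (f i))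
  | .ior f => inatSum (fun i => size (f i))
  | .ex _ φ => size φ + 1
  | .all _ φ => size φ + 1

abbrev StrucAsn (L : Vocab) := Σ A : Struc L, (ℕ → A.Dom)

def Separates {L : Vocab} (φ : Fml L) (𝔄 𝔅 : Set (StrucAsn L)) : Prop :=
  (∀ p ∈ 𝔄, Sat p.1 p.2 φ) ∧ (∀ p ∈ 𝔅, ¬ Sat p.1 p.2 φ)

inductive IsBasic {L : Vocab} : Fml L → Prop
  | eq (i j : ℕ) : IsBasic (.eq i j)
  | neq (i j : ℕ) : IsBasic (.neq i j)
  | rel (R) (ts) : IsBasic (.rel R ts)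
  | nrel (R) (ts) : IsBasic (.nrel R ts)


/-- Quantifier-free `L_{ω₁ω}`-formulas. -/
inductive IsQF {L : Vocab} : Fml L → Prop
  | eq (i j : ℕ) : IsQF (.eq i j)
  | neq (i j : ℕ) : IsQF (.neq i j)
  | rel (R) (ts) : IsQF (.rel R ts)
  | nrel (R) (ts) : IsQF (.nrel R ts)
  | and {φ ψ : Fml L} : IsQF φ → IsQF ψ → IsQF (.and φ ψ)
  | or {φ ψ : Fml L} : IsQF φ → IsQF ψ → IsQF (.or φ ψ)
  | iand {f : ℕ → Fml L} : (∀ i, IsQF (f i)) → IsQF (.iand f)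
  | ior {f : ℕ → Fml L} : (∀ i, IsQF (f i)) → IsQF (.ior f)

/-- Player I has a winning strategy in the quantifier-free (propositional) game
`EFB^P_γ(𝔄, 𝔅)`: only the splitting moves (i)–(v) are allowed. -/
inductive WinIQF {L : Vocab} : Set (StrucAsn L) → Set (StrucAsn L) → Ordinal → Prop
  | basic {𝔄 𝔅 : Set (StrucAsn L)} {γ : Ordinal} (φ : Fml L) :
      IsBasic φ → Separates φ 𝔄 𝔅 → WinIQF 𝔄 𝔅 γ
  | splitL {𝔄 𝔅 : Set (StrucAsn L)} {γ : Ordinal} (𝔄₁ 𝔄₂ : Set (StrucAsn L))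
      (γ₁ γ₂ : Ordinal) : 𝔄 = 𝔄₁ ∪ 𝔄₂ → γ₁ ≠ 0 → γ₂ ≠ 0 → Ordinal.nadd γ₁ γ₂ ≤ γ →
      WinIQF 𝔄₁ 𝔅 γ₁ → WinIQF 𝔄₂ 𝔅 γ₂ → WinIQF 𝔄 𝔅 γ
  | splitR {𝔄 𝔅 : Set (StrucAsn L)} {γ : Ordinal} (𝔅₁ 𝔅₂ : Set (StrucAsn L))
      (γ₁ γ₂ : Ordinal) : 𝔅 = 𝔅₁ ∪ 𝔅₂ → γ₁ ≠ 0 → γ₂ ≠ 0 → Ordinal.nadd γ₁ γ₂ ≤ γ →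
      WinIQF 𝔄 𝔅₁ γ₁ → WinIQF 𝔄 𝔅₂ γ₂ → WinIQF 𝔄 𝔅 γ
  | isplitL {𝔄 𝔅 : Set (StrucAsn L)} {γ : Ordinal} (𝔄s : ℕ → Set (StrucAsn L))
      (γs : ℕ → Ordinal) : 𝔄 = ⋃ i, 𝔄s i → (∀ i, γs i ≠ 0) → inatSum γs ≤ γ →
      (∀ i, WinIQF (𝔄s i) 𝔅 (γs i)) → WinIQF 𝔄 𝔅 γ
  | isplitR {𝔄 𝔅 : Set (StrucAsn L)} {γ : Ordinal} (𝔅s : ℕ → Set (StrucAsn L))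
      (γs : ℕ → Ordinal) : 𝔅 = ⋃ i, 𝔅s i → (∀ i, γs i ≠ 0) → inatSum γs ≤ γ →
      (∀ i, WinIQF 𝔄 (𝔅s i) (γs i)) → WinIQF 𝔄 𝔅 γ

namespace Ordinal

theorem nadd_bdd (a : Ordinal.{u}) (f : Set.Iio a → Ordinal.{u}) : BddAbove (Set.range f) :=
  Ordinal.bddAbove_of_small

theorem lt_nadd_left {a' a : Ordinal.{u}} (h : a' < a) (b : Ordinal.{u}) :
    Ordinal.nadd a' b < Ordinal.nadd a b := by
  rw [Ordinal.nadd.eq_1 a b]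
  refine Order.lt_succ_iff.mpr le_rfl |>.trans_le (le_max_of_le_left ?_)
  exact le_ciSup (f := fun x : Set.Iio a => Order.succ (Ordinal.nadd x.1 b)) (nadd_bdd a _) ⟨a', h⟩

theorem lt_nadd_right {b' b : Ordinal.{u}} (h : b' < b) (a : Ordinal.{u}) :
    Ordinal.nadd a b' < Ordinal.nadd a b := by
  rw [Ordinal.nadd.eq_1 a b]
  refine Order.lt_succ_iff.mpr le_rfl |>.trans_le (le_max_of_le_right ?_)
  exact le_ciSup (f := fun x : Set.Iio b => Order.succ (Ordinal.nadd a x.1)) (nadd_bdd b _) ⟨b', h⟩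

theorem nadd_le_nadd_left {b c : Ordinal.{u}} (h : b ≤ c) (a : Ordinal.{u}) :
    Ordinal.nadd a b ≤ Ordinal.nadd a c := by
  rcases h.lt_or_eq with h | h
  · exact (lt_nadd_right h a).le
  · rw [h]

theorem nadd_le_nadd_right {b c : Ordinal.{u}} (h : b ≤ c) (a : Ordinal.{u}) :
    Ordinal.nadd b a ≤ Ordinal.nadd c a := by
  rcases h.lt_or_eq with h | h
  · exact (lt_nadd_left h a).le
  · rw [h]

theorem nadd_le_nadd {a b c d : Ordinal.{u}} (h1 : a ≤ b) (h2 : c ≤ d) :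
    Ordinal.nadd a c ≤ Ordinal.nadd b d :=
  (nadd_le_nadd_left h2 a).trans (nadd_le_nadd_right h1 d)

theorem nadd_zero (a : Ordinal.{u}) : Ordinal.nadd a 0 = a := by
  induction a using WellFoundedLT.induction with
  | _ a ih =>
  apply le_antisymm
  · rw [Ordinal.nadd.eq_1 a 0]
    refine max_le (ciSup_le' fun x => ?_) (ciSup_le' fun x => ?_)
    · rw [ih x.1 x.2]; exact Order.succ_le_of_lt x.2
    · exact absurd x.2 (not_lt_bot (a := x.1))
  · refine le_of_forall_lt fun c hc => ?_
    rw [← ih c hc]; exact lt_nadd_left hc 0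

theorem zero_nadd (a : Ordinal.{u}) : Ordinal.nadd 0 a = a := by
  induction a using WellFoundedLT.induction with
  | _ a ih =>
  apply le_antisymm
  · rw [Ordinal.nadd.eq_1 0 a]
    refine max_le (ciSup_le' fun x => ?_) (ciSup_le' fun x => ?_)
    · exact absurd x.2 (not_lt_bot (a := x.1))
    · rw [ih x.1 x.2]; exact Order.succ_le_of_lt x.2
  · refine le_of_forall_lt fun c hc => ?_
    rw [← ih c hc]; exact lt_nadd_right hc 0

end Ordinal

lemma one_le_size {L : Vocab} (φ : Fml L) : 1 ≤ size φ := by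
  induction φ with
  | eq i j => simp [size]
  | neq i j => simp [size]
  | rel R ts => simp [size]
  | nrel R ts => simp [size]
  | and φ ψ ihφ ihψ =>
      calc (1:Ordinal) ≤ size φ := ihφ
      _ = Ordinal.nadd (size φ) 0 := (Ordinal.nadd_zero _).symm
      _ ≤ Ordinal.nadd (size φ) (size ψ) := Ordinal.nadd_le_nadd_left (zero_le (a := size ψ)) _
      _ = size (.and φ ψ) := rfl
  | or φ ψ ihφ ihψ =>
      calc (1:Ordinal) ≤ size φ := ihφ
      _ = Ordinal.nadd (size φ) 0 := (Ordinal.nadd_zero _).symm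
      _ ≤ Ordinal.nadd (size φ) (size ψ) := Ordinal.nadd_le_nadd_left (zero_le (a := size ψ)) _
      _ = size (.or φ ψ) := rfl
  | iand f ih =>
      have : (1:Ordinal) ≤ natSumPrefix (fun i => size (f i)) 1 := by
        simpa [natSumPrefix, Ordinal.zero_nadd] using ih 0
      exact this.trans (le_ciSup (Ordinal.bddAbove_range _) 1)
  | ior f ih =>
      have : (1:Ordinal) ≤ natSumPrefix (fun i => size (f i)) 1 := by
        simpa [natSumPrefix, Ordinal.zero_nadd] using ih 0
      exact this.trans (le_ciSup (Ordinal.bddAbove_range _) 1)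
  | ex n φ ih => exact le_trans ih le_self_add
  | all n φ ih => exact le_trans ih le_self_add

lemma natSumPrefix_mono {γ δ : ℕ → Ordinal} (h : ∀ i, γ i ≤ δ i) (n : ℕ) :
    natSumPrefix γ n ≤ natSumPrefix δ n := by
  induction n with
  | zero => simp [natSumPrefix]
  | succ n ih => exact Ordinal.nadd_le_nadd ih (h n)

lemma inatSum_mono {γ δ : ℕ → Ordinal} (h : ∀ i, γ i ≤ δ i) : inatSum γ ≤ inatSum δ :=
  ciSup_le fun n => (natSumPrefix_mono h n).trans (le_ciSup (Ordinal.bddAbove_range _) n)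

lemma le_inatSum (γ : ℕ → Ordinal) (i : ℕ) : γ i ≤ inatSum γ := by
  have : γ i ≤ natSumPrefix γ (i+1) := by
    simpa [natSumPrefix, Ordinal.zero_nadd] using
      Ordinal.nadd_le_nadd (zero_le (a := natSumPrefix γ i)) (le_refl (γ i))
  exact this.trans (le_ciSup (Ordinal.bddAbove_range _) (i+1))

lemma WinIQF.mono {L : Vocab} {𝔄 𝔅 : Set (StrucAsn L)} {γ γ' : Ordinal}
    (h : WinIQF 𝔄 𝔅 γ) (hle : γ ≤ γ') : WinIQF 𝔄 𝔅 γ' := by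
  cases h with
  | basic φ hb hs => exact .basic φ hb hs
  | splitL 𝔄₁ 𝔄₂ γ₁ γ₂ hu h1 h2 hsum w1 w2 =>
      exact .splitL 𝔄₁ 𝔄₂ γ₁ γ₂ hu h1 h2 (hsum.trans hle) w1 w2
  | splitR 𝔅₁ 𝔅₂ γ₁ γ₂ hu h1 h2 hsum w1 w2 =>
      exact .splitR 𝔅₁ 𝔅₂ γ₁ γ₂ hu h1 h2 (hsum.trans hle) w1 w2
  | isplitL 𝔄s γs hu hnz hsum w =>
      exact .isplitL 𝔄s γs hu hnz (hsum.trans hle) w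
  | isplitR 𝔅s γs hu hnz hsum w =>
      exact .isplitR 𝔅s γs hu hnz (hsum.trans hle) w

lemma winOfSep {L : Vocab} {φ : Fml L} (hqf : IsQF φ) :
    ∀ 𝔄 𝔅 : Set (StrucAsn L), Separates φ 𝔄 𝔅 → WinIQF 𝔄 𝔅 (size φ) := by
  induction hqf with
  | eq i j => exact fun 𝔄 𝔅 h => .basic _ (.eq i j) h
  | neq i j => exact fun 𝔄 𝔅 h => .basic _ (.neq i j) h
  | rel R ts => exact fun 𝔄 𝔅 h => .basic _ (.rel R ts) h
  | nrel R ts => exact fun 𝔄 𝔅 h => .basic _ (.nrel R ts) h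
  | @and φ ψ hφ hψ ihφ ihψ =>
      intro 𝔄 𝔅 h
      refine .splitR {p ∈ 𝔅 | ¬ Sat p.1 p.2 φ} {p ∈ 𝔅 | ¬ Sat p.1 p.2 ψ}
        (size φ) (size ψ) ?_ (Ordinal.one_le_iff_ne_zero.mp (one_le_size φ))
        (Ordinal.one_le_iff_ne_zero.mp (one_le_size ψ)) le_rfl ?_ ?_
      · ext p
        constructor
        · intro hp
          have := h.2 p hp
          simp only [Sat, not_and_or] at this
          rcases this with h1 | h1
          · exact Or.inl ⟨hp, h1⟩
          · exact Or.inr ⟨hp, h1⟩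
        · rintro (⟨hp, _⟩ | ⟨hp, _⟩) <;> exact hp
      · exact ihφ _ _ ⟨fun p hp => (h.1 p hp).1, fun p hp => hp.2⟩
      · exact ihψ _ _ ⟨fun p hp => (h.1 p hp).2, fun p hp => hp.2⟩
  | @or φ ψ hφ hψ ihφ ihψ =>
      intro 𝔄 𝔅 h
      refine .splitL {p ∈ 𝔄 | Sat p.1 p.2 φ} {p ∈ 𝔄 | Sat p.1 p.2 ψ}
        (size φ) (size ψ) ?_ (Ordinal.one_le_iff_ne_zero.mp (one_le_size φ))
        (Ordinal.one_le_iff_ne_zero.mp (one_le_size ψ)) le_rfl ?_ ?_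
      · ext p
        constructor
        · intro hp
          rcases h.1 p hp with h1 | h1
          · exact Or.inl ⟨hp, h1⟩
          · exact Or.inr ⟨hp, h1⟩
        · rintro (⟨hp, _⟩ | ⟨hp, _⟩) <;> exact hp
      · refine ihφ _ _ ⟨fun p hp => hp.2, fun p hp hs => h.2 p hp (Or.inl hs)⟩
      · refine ihψ _ _ ⟨fun p hp => hp.2, fun p hp hs => h.2 p hp (Or.inr hs)⟩
  | @iand f hf ih =>
      intro 𝔄 𝔅 h
      refine .isplitR (fun i => {p ∈ 𝔅 | ¬ Sat p.1 p.2 (f i)}) (fun i => size (f i)) ?_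
        (fun i => ?_) le_rfl (fun i => ih i _ _ ⟨fun p hp => h.1 p hp i, fun p hp => hp.2⟩)
      · ext p
        simp only [Set.mem_iUnion, Set.mem_setOf_eq]
        constructor
        · intro hp
          have := h.2 p hp
          simp only [Sat, not_forall] at this
          obtain ⟨i, hi⟩ := this
          exact ⟨i, hp, hi⟩
        · rintro ⟨i, hp, _⟩; exact hp
      · exact Ordinal.one_le_iff_ne_zero.mp (one_le_size (f i))
  | @ior f hf ih =>
      intro 𝔄 𝔅 h
      refine .isplitL (fun i => {p ∈ 𝔄 | Sat p.1 p.2 (f i)}) (fun i => size (f i)) ?_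
        (fun i => ?_) le_rfl
        (fun i => ih i _ _ ⟨fun p hp => hp.2, fun p hp hs => h.2 p hp ⟨i, hs⟩⟩)
      · ext p
        simp only [Set.mem_iUnion, Set.mem_setOf_eq]
        constructor
        · intro hp
          obtain ⟨i, hi⟩ := h.1 p hp
          exact ⟨i, hp, hi⟩
        · rintro ⟨i, hp, _⟩; exact hp
      · exact Ordinal.one_le_iff_ne_zero.mp (one_le_size (f i))

lemma qfOfBasic {L : Vocab} {φ : Fml L} (h : IsBasic φ) : IsQF φ := by
  cases h with
  | eq i j => exact .eq i j
  | neq i j => exact .neq i j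
  | rel R ts => exact .rel R ts
  | nrel R ts => exact .nrel R ts

lemma sepOfWin {L : Vocab} {𝔄 𝔅 : Set (StrucAsn L)} {γ : Ordinal}
    (h : WinIQF 𝔄 𝔅 γ) (hγ : γ ≠ 0) :
    ∃ φ : Fml L, IsQF φ ∧ size φ ≤ γ ∧ Separates φ 𝔄 𝔅 := by
  induction h with
  | @basic 𝔄 𝔅 γ φ hb hs =>
      refine ⟨φ, qfOfBasic hb, ?_, hs⟩
      cases hb <;> simpa [size, Ordinal.one_le_iff_ne_zero]
  | @splitL 𝔄 𝔅 γ 𝔄₁ 𝔄₂ γ₁ γ₂ hu h1 h2 hsum _ _ ih1 ih2 =>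
      obtain ⟨φ₁, hq1, hs1, hsep1⟩ := ih1 h1
      obtain ⟨φ₂, hq2, hs2, hsep2⟩ := ih2 h2
      refine ⟨.or φ₁ φ₂, .or hq1 hq2, le_trans (Ordinal.nadd_le_nadd hs1 hs2) hsum, ?_, ?_⟩
      · intro p hp
        rcases hu ▸ hp with hp | hp
        · exact Or.inl (hsep1.1 p hp)
        · exact Or.inr (hsep2.1 p hp)
      · rintro p hp (hs | hs)
        · exact hsep1.2 p hp hs
        · exact hsep2.2 p hp hs
  | @splitR 𝔄 𝔅 γ 𝔅₁ 𝔅₂ γ₁ γ₂ hu h1 h2 hsum _ _ ih1 ih2 =>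
      obtain ⟨φ₁, hq1, hs1, hsep1⟩ := ih1 h1
      obtain ⟨φ₂, hq2, hs2, hsep2⟩ := ih2 h2
      refine ⟨.and φ₁ φ₂, .and hq1 hq2, le_trans (Ordinal.nadd_le_nadd hs1 hs2) hsum, ?_, ?_⟩
      · exact fun p hp => ⟨hsep1.1 p hp, hsep2.1 p hp⟩
      · intro p hp hs
        rcases hu ▸ hp with hp | hp
        · exact hsep1.2 p hp hs.1
        · exact hsep2.2 p hp hs.2
  | @isplitL 𝔄 𝔅 γ 𝔄s γs hu hnz hsum _ ih =>
      choose φs hq hsz hsep using fun i => ih i (hnz i)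
      refine ⟨.ior φs, .ior hq, le_trans (inatSum_mono hsz) hsum, ?_, ?_⟩
      · intro p hp
        obtain ⟨i, hi⟩ := Set.mem_iUnion.mp (hu ▸ hp)
        exact ⟨i, (hsep i).1 p hi⟩
      · rintro p hp ⟨i, hs⟩
        exact (hsep i).2 p hp hs
  | @isplitR 𝔄 𝔅 γ 𝔅s γs hu hnz hsum _ ih =>
      choose φs hq hsz hsep using fun i => ih i (hnz i)
      refine ⟨.iand φs, .iand hq, le_trans (inatSum_mono hsz) hsum, ?_, ?_⟩
      · exact fun p hp i => (hsep i).1 p hp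
      · intro p hp hs
        obtain ⟨i, hi⟩ := Set.mem_iUnion.mp (hu ▸ hp)
        exact (hsep i).2 p hi (hs i)

theorem adequacy_EFB_qf {L : Vocab} (𝔄 𝔅 : Set (StrucAsn L)) (α : Ordinal)
    (hcount : α < (Cardinal.aleph 1).ord) (hα : 1 ≤ α) :
    WinIQF 𝔄 𝔅 α ↔ ∃ φ : Fml L, IsQF φ ∧ size φ ≤ α ∧ Separates φ 𝔄 𝔅 := by
  constructor
  · intro h
    exact sepOfWin h (Ordinal.one_le_iff_ne_zero.mp hα)
  · rintro ⟨φ, hq, hs, hsep⟩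
    exact (winOfSep hq 𝔄 𝔅 hsep).mono hs
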